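/- Let A ⊆ ℝ be both Fσ and Gδ, and g : ℝ \ A → A continuous. Define φ : ℝ → ℝ by φ(x) = x for x ∈ A and φ(x) = g(x) otherwise. Then φ is a Baire-one function: there exists a sequence of continuous functions φₙ : ℝ → ℝ converging pointwise to φ. -/

import Mathlib

open Set Filter Topology

def IsFSigma {X : Type*} [TopologicalSpace X] (s : Set X) : Prop :=
  ∃ F : ℕ → Set X, (∀ n, IsClosed (F n)) ∧ s = ⋃ n, F n

def FirstBorelClass {X Y : Type*} [TopologicalSpace X] [TopologicalSpace Y] (f : X → Y) : Prop :=
  ∀ U : Set Y, IsOpen U → IsFSigma (f ⁻¹' U)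

lemma continuousOn_union_of_isClosed {X Y : Type*} [TopologicalSpace X] [TopologicalSpace Y]
    {f : X → Y} {s t : Set X} (hs : IsClosed s) (ht : IsClosed t)
    (hfs : ContinuousOn f s) (hft : ContinuousOn f t) : ContinuousOn f (s ∪ t) := by
  rw [Set.union_eq_iUnion]
  exact (locallyFinite_of_finite _).continuousOn_iUnion
    (fun b => by cases b <;> simpa) (fun b => by cases b <;> simpa)

theorem retraction_baire_one (A : Set ℝ)
    (hFσ : IsFSigma A) (hGδ : IsGδ A)
    (g : ℝ → ℝ) (hg : ContinuousOn g Aᶜ) (hgA : MapsTo g Aᶜ A)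
    (φ : ℝ → ℝ) (hφ₁ : ∀ x ∈ A, φ x = x) (hφ₂ : ∀ x ∉ A, φ x = g x) :
    ∃ φₙ : ℕ → ℝ → ℝ, (∀ n, Continuous (φₙ n)) ∧
      ∀ x, Tendsto (fun n => φₙ n x) atTop (𝓝 (φ x)) := by
  obtain ⟨F, hFc, hFU⟩ := hFσ
  obtain ⟨U, hUo, hUI⟩ := hGδ.eq_iInter_nat
  -- closed pieces
  set P : ℕ → Set ℝ := fun n => ⋃ k ∈ Finset.range (n + 1), F k with hP
  set Q : ℕ → Set ℝ := fun n => ⋃ k ∈ Finset.range (n + 1), (U k)ᶜ with hQ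
  have hPc : ∀ n, IsClosed (P n) := fun n =>
    isClosed_biUnion_finset fun k _ => hFc k
  have hQc : ∀ n, IsClosed (Q n) := fun n =>
    isClosed_biUnion_finset fun k _ => (hUo k).isClosed_compl
  have hPA : ∀ n, P n ⊆ A := by
    intro n x hx
    simp only [hP, mem_iUnion] at hx
    obtain ⟨k, _, hk⟩ := hx
    rw [hFU]; exact mem_iUnion.2 ⟨k, hk⟩
  have hQA : ∀ n, Q n ⊆ Aᶜ := by
    intro n x hx
    simp only [hQ, mem_iUnion] at hx
    obtain ⟨k, _, hk⟩ := hx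
    intro hxA
    exact hk (by rw [hUI] at hxA; exact mem_iInter.1 hxA k)
  set S : ℕ → Set ℝ := fun n => P n ∪ Q n with hS
  have hSc : ∀ n, IsClosed (S n) := fun n => (hPc n).union (hQc n)
  have hScont : ∀ n, ContinuousOn φ (S n) := by
    intro n
    apply continuousOn_union_of_isClosed (hPc n) (hQc n)
    · exact continuousOn_id.congr fun x hx => hφ₁ x (hPA n hx)
    · exact (hg.mono (hQA n)).congr fun x hx => hφ₂ x (hQA n hx)
  -- Tietze extension
  have hext : ∀ n, ∃ ψ : C(ℝ, ℝ), ∀ x ∈ S n, ψ x = φ x := by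
    intro n
    obtain ⟨ψ, hψ⟩ := ContinuousMap.exists_restrict_eq (Y := ℝ) (hSc n)
      ⟨(S n).restrict φ, continuousOn_iff_continuous_restrict.1 (hScont n)⟩
    refine ⟨ψ, fun x hx => ?_⟩
    have := congrFun (congrArg DFunLike.coe hψ) ⟨x, hx⟩
    exact this
  choose ψ hψ using hext
  refine ⟨fun n => ψ n, fun n => (ψ n).continuous, fun x => ?_⟩
  have hmem : ∃ N, ∀ n ≥ N, x ∈ S n := by
    by_cases hx : x ∈ A
    · rw [hFU] at hx
      obtain ⟨k, hk⟩ := mem_iUnion.1 hx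
      refine ⟨k, fun n hn => Or.inl ?_⟩
      exact mem_iUnion.2 ⟨k, mem_iUnion.2 ⟨Finset.mem_range.2 (Nat.lt_succ_of_le hn), hk⟩⟩
    · have : x ∈ ⋃ k, (U k)ᶜ := by
        simp only [mem_iUnion, mem_compl_iff]
        by_contra h
        push_neg at h
        exact hx (by rw [hUI]; exact mem_iInter.2 h)
      obtain ⟨k, hk⟩ := mem_iUnion.1 this
      refine ⟨k, fun n hn => Or.inr ?_⟩
      exact mem_iUnion.2 ⟨k, mem_iUnion.2 ⟨Finset.mem_range.2 (Nat.lt_succ_of_le hn), hk⟩⟩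
  obtain ⟨N, hN⟩ := hmem
  apply Tendsto.congr' _ tendsto_const_nhds
  filter_upwards [eventually_ge_atTop N] with n hn
  exact (hψ n x (hN n hn)).symm
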